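/- Let $M = \begin{pmatrix} A & B \\ C & D \end{pmatrix}$ be the block form of an $N\times N$ Manin matrix with entries in an associative algebra $\mathcal{A}$, and suppose $\mathcal{A}$ embeds in a larger algebra $\mathcal{A}''$ in which the block $D$ has a right inverse $D^{-1}$. Then $\mathrm{cdet}\, M = \mathrm{cdet}(D)\cdot\mathrm{cdet}(A - B D^{-1} C)$, as an identity in $\mathcal{A}$. -/

import Mathlib

def cdet {A : Type*} [Ring A] {n : ℕ} (M : Matrix (Fin n) (Fin n) A) : A :=
  ∑ σ : Equiv.Perm (Fin n), ((Equiv.Perm.sign σ : ℤ) • (List.ofFn fun j => M (σ j) j).prod)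

def IsManin {A : Type*} [Ring A] {m n : Type*} (M : Matrix m n A) : Prop :=
  (∀ i k j, Commute (M i j) (M k j)) ∧
  (∀ i k j l, M i j * M k l - M k l * M i j = M k j * M i l - M i l * M k j)

namespace ManinAux

open Equiv Finset

variable {R : Type*} [Ring R] {n : ℕ}

theorem isManin_submatrix {m' n' m n : Type*} {M : Matrix m n R} (h : IsManin M)
    (r : m' → m) (c : n' → n) : IsManin (M.submatrix r c) :=
  ⟨fun i k j => h.1 _ _ _, fun i k j l => h.2 _ _ _ _⟩

theorem isManin_map {R' : Type*} [Ring R'] {m n : Type*} {M : Matrix m n R} (h : IsManin M)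
    (f : R →+* R') : IsManin (M.map f) := by
  constructor
  · intro i k j
    exact (h.1 i k j).map f
  · intro i k j l
    have := congrArg f (h.2 i k j l)
    simpa [Matrix.map_apply, map_sub, map_mul] using this

/-- decorated permutation sum -/
def msum (M : Matrix (Fin n) (Fin n) R) (c : Fin n → Fin n) (u : Fin n → R) : R :=
  ∑ σ : Equiv.Perm (Fin n),
    ((Equiv.Perm.sign σ : ℤ) • (List.ofFn fun t => M (σ t) (c t) * u t).prod)

theorem cdet_eq_msum (M : Matrix (Fin n) (Fin n) R) : cdet M = msum M id (fun _ => 1) := by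
  simp [cdet, msum]

/-- split an `ofFn` product at two adjacent positions -/
theorem prod_split {i : ℕ} (h : i + 1 < n) (g : Fin n → R) :
    (List.ofFn g).prod =
      ((List.ofFn g).take i).prod *
        (g ⟨i, by omega⟩ * (g ⟨i + 1, h⟩ * ((List.ofFn g).drop (i + 2)).prod)) := by
  have hlen : (List.ofFn g).length = n := List.length_ofFn
  have h1 : i < (List.ofFn g).length := by omega
  have h2 : i + 1 < (List.ofFn g).length := by omega
  conv_lhs => rw [← List.take_append_drop i (List.ofFn g)]
  rw [List.prod_append, List.drop_eq_getElem_cons h1, List.drop_eq_getElem_cons h2]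
  simp [List.getElem_ofFn, mul_assoc]

theorem take_ofFn_congr {g g' : Fin n → R} (i : ℕ)
    (hg : ∀ t : Fin n, (t : ℕ) < i → g t = g' t) :
    (List.ofFn g).take i = (List.ofFn g').take i := by
  apply List.ext_getElem
  · simp
  · intro m h1 h2
    simp only [List.getElem_take, List.getElem_ofFn]
    have : m < i := ((by simpa using h1 : m < i ∧ m < n)).1
    exact hg _ this

theorem drop_ofFn_congr {g g' : Fin n → R} (i : ℕ)
    (hg : ∀ t : Fin n, i ≤ (t : ℕ) → g t = g' t) :
    (List.ofFn g).drop i = (List.ofFn g').drop i := by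
  apply List.ext_getElem
  · simp
  · intro m h1 h2
    simp only [List.getElem_drop, List.getElem_ofFn]
    exact hg _ (by simp)

/-- algebra helper for the adjacent-swap pairing -/
theorem quad_helper {P Q a b c d : R} (h : a * d - d * a = c * b - b * c) (z : ℤ) :
    (z • (P * (b * (c * Q))) + z • (P * (a * (d * Q)))) +
      ((-z) • (P * (d * (a * Q))) + (-z) • (P * (c * (b * Q)))) = 0 := by
  have key : b * (c * Q) + a * (d * Q) - (d * (a * Q) + c * (b * Q)) = 0 := by
    have h2 : b * c + a * d - (d * a + c * b) = 0 := by
      have : a * d - d * a - (c * b - b * c) = 0 := by rw [h]; abel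
      calc b * c + a * d - (d * a + c * b)
        = a * d - d * a - (c * b - b * c) := by abel
        _ = 0 := this
    calc b * (c * Q) + a * (d * Q) - (d * (a * Q) + c * (b * Q))
        = (b * c + a * d - (d * a + c * b)) * Q := by
          simp only [add_mul, sub_mul, mul_assoc]
      _ = 0 := by rw [h2, zero_mul]
  have e1 : z • (P * (b * (c * Q))) + z • (P * (a * (d * Q))) +
      ((-z) • (P * (d * (a * Q))) + (-z) • (P * (c * (b * Q)))) =
      z • (P * (b * (c * Q) + a * (d * Q) - (d * (a * Q) + c * (b * Q)))) := by
    simp only [mul_add, mul_sub, smul_add, smul_sub, neg_smul]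
    abel
  rw [e1, key, mul_zero, smul_zero]

theorem msum_swap_adjacent {M : Matrix (Fin n) (Fin n) R} (hM : IsManin M)
    {c : Fin n → Fin n} {u : Fin n → R} {i : ℕ} (h : i + 1 < n)
    (hui : u ⟨i, by omega⟩ = 1) (hui' : u ⟨i + 1, h⟩ = 1) :
    msum M (c ∘ Equiv.swap ⟨i, by omega⟩ ⟨i + 1, h⟩) u = - msum M c u := by
  set i₀ : Fin n := ⟨i, by omega⟩ with hi₀
  set i₁ : Fin n := ⟨i + 1, h⟩ with hi₁
  have hne : i₀ ≠ i₁ := by simp [hi₀, hi₁, Fin.ext_iff]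
  set sw := Equiv.swap i₀ i₁ with hsw
  rw [eq_neg_iff_add_eq_zero]
  unfold msum
  rw [← Finset.sum_add_distrib]
  apply Finset.sum_ninvolution (g := fun σ => σ * sw)
  · intro σ
    -- expand the four products
    have hsign : ((Equiv.Perm.sign (σ * sw) : ℤ)) = -(Equiv.Perm.sign σ : ℤ) := by
      simp [hsw, Equiv.Perm.sign_swap hne]
    have hrow : ∀ t : Fin n, t ≠ i₀ → t ≠ i₁ → (σ * sw) t = σ t := by
      intro t h1 h2
      simp [hsw, Equiv.Perm.mul_apply, Equiv.swap_apply_of_ne_of_ne h1 h2]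
    have hcol : ∀ t : Fin n, t ≠ i₀ → t ≠ i₁ → (c ∘ sw) t = c t := by
      intro t h1 h2
      simp [hsw, Function.comp, Equiv.swap_apply_of_ne_of_ne h1 h2]
    -- abbreviations for the four entry functions
    set g1 : Fin n → R := fun t => M ((σ : Equiv.Perm (Fin n)) t) ((c ∘ sw) t) * u t with hg1
    set g2 : Fin n → R := fun t => M (σ t) (c t) * u t with hg2
    set g3 : Fin n → R := fun t => M ((σ * sw) t) ((c ∘ sw) t) * u t with hg3
    set g4 : Fin n → R := fun t => M ((σ * sw) t) (c t) * u t with hg4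
    have agree : ∀ (t : Fin n), t ≠ i₀ → t ≠ i₁ →
        g1 t = g2 t ∧ g3 t = g2 t ∧ g4 t = g2 t := by
      intro t h1 h2
      simp only [hg1, hg2, hg3, hg4, Function.comp, Equiv.swap_apply_of_ne_of_ne h1 h2,
        Equiv.Perm.mul_apply]
      simp [hsw, Equiv.swap_apply_of_ne_of_ne h1 h2]
    have tne : ∀ (t : Fin n), (t : ℕ) < i ∨ i + 2 ≤ (t : ℕ) → t ≠ i₀ ∧ t ≠ i₁ := by
      intro t ht
      constructor <;>
        · intro hh
          have : (t : ℕ) = i ∨ (t : ℕ) = i + 1 := by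
            rw [hh]; simp [hi₀, hi₁]
          omega
    set P := ((List.ofFn g2).take i).prod with hP
    set Q := ((List.ofFn g2).drop (i + 2)).prod with hQ
    have takeEq : ∀ (g : Fin n → R), (∀ t : Fin n, t ≠ i₀ → t ≠ i₁ → g t = g2 t) →
        ((List.ofFn g).take i).prod = P ∧ ((List.ofFn g).drop (i + 2)).prod = Q := by
      intro g hg
      constructor
      · rw [hP]; congr 1
        apply take_ofFn_congr
        intro t ht
        have := tne t (Or.inl ht)
        exact hg t this.1 this.2
      · rw [hQ]; congr 1
        apply drop_ofFn_congr
        intro t ht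
        have := tne t (Or.inr ht)
        exact hg t this.1 this.2
    -- values at the two swapped positions
    have hswi₀ : sw i₀ = i₁ := Equiv.swap_apply_left _ _
    have hswi₁ : sw i₁ = i₀ := Equiv.swap_apply_right _ _
    have e1 : (List.ofFn g1).prod = P * (M (σ i₀) (c i₁) * (M (σ i₁) (c i₀) * Q)) := by
      rw [prod_split h g1, (takeEq g1 (fun t a b => (agree t a b).1)).1,
        (takeEq g1 (fun t a b => (agree t a b).1)).2]
      simp only [hg1, Function.comp]
      rw [show (⟨i, by omega⟩ : Fin n) = i₀ from rfl, show (⟨i+1, h⟩ : Fin n) = i₁ from rfl,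
        hswi₀, hswi₁, hui, hui', mul_one, mul_one]
    have e2 : (List.ofFn g2).prod = P * (M (σ i₀) (c i₀) * (M (σ i₁) (c i₁) * Q)) := by
      rw [prod_split h g2]
      simp only [hg2]
      rw [show (⟨i, by omega⟩ : Fin n) = i₀ from rfl, show (⟨i+1, h⟩ : Fin n) = i₁ from rfl,
        hui, hui', mul_one, mul_one]
    have e3 : (List.ofFn g3).prod = P * (M (σ i₁) (c i₁) * (M (σ i₀) (c i₀) * Q)) := by
      rw [prod_split h g3, (takeEq g3 (fun t a b => (agree t a b).2.1)).1,
        (takeEq g3 (fun t a b => (agree t a b).2.1)).2]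
      simp only [hg3, Function.comp]
      rw [show (⟨i, by omega⟩ : Fin n) = i₀ from rfl, show (⟨i+1, h⟩ : Fin n) = i₁ from rfl,
        hswi₀, hswi₁, hui, hui', mul_one, mul_one]
      simp [Equiv.Perm.mul_apply, hswi₀, hswi₁]
    have e4 : (List.ofFn g4).prod = P * (M (σ i₁) (c i₀) * (M (σ i₀) (c i₁) * Q)) := by
      rw [prod_split h g4, (takeEq g4 (fun t a b => (agree t a b).2.2)).1,
        (takeEq g4 (fun t a b => (agree t a b).2.2)).2]
      simp only [hg4]
      rw [show (⟨i, by omega⟩ : Fin n) = i₀ from rfl, show (⟨i+1, h⟩ : Fin n) = i₁ from rfl,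
        hui, hui', mul_one, mul_one]
      simp [Equiv.Perm.mul_apply, hswi₀, hswi₁]
    show (Equiv.Perm.sign σ : ℤ) • (List.ofFn g1).prod + (Equiv.Perm.sign σ : ℤ) • (List.ofFn g2).prod
        + ((Equiv.Perm.sign (σ * sw) : ℤ) • (List.ofFn g3).prod
          + (Equiv.Perm.sign (σ * sw) : ℤ) • (List.ofFn g4).prod) = 0
    rw [hsign, e1, e2, e3, e4]
    exact quad_helper (hM.2 (σ i₀) (σ i₁) (c i₀) (c i₁)) _
  · intro σ _ hcon
    have : sw = 1 := mul_left_cancel (a := σ) (by rw [mul_one]; exact hcon)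
    have := congrArg (fun (e : Equiv.Perm (Fin n)) => e i₀) this
    simp [hsw, Equiv.swap_apply_left] at this
    exact hne this.symm
  · intro σ; exact Finset.mem_univ _
  · intro σ
    rw [mul_assoc, Equiv.swap_mul_self, mul_one]

theorem msum_adjacent_dup {M : Matrix (Fin n) (Fin n) R} (hM : IsManin M)
    {c : Fin n → Fin n} {u : Fin n → R} {i : ℕ} (h : i + 1 < n)
    (hc : c ⟨i, by omega⟩ = c ⟨i + 1, h⟩) (hui : u ⟨i, by omega⟩ = 1) :
    msum M c u = 0 := by
  set i₀ : Fin n := ⟨i, by omega⟩ with hi₀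
  set i₁ : Fin n := ⟨i + 1, h⟩ with hi₁
  have hne : i₀ ≠ i₁ := by simp [hi₀, hi₁, Fin.ext_iff]
  set sw := Equiv.swap i₀ i₁ with hsw
  unfold msum
  apply Finset.sum_ninvolution (g := fun σ => σ * sw)
  · intro σ
    have hsign : ((Equiv.Perm.sign (σ * sw) : ℤ)) = -(Equiv.Perm.sign σ : ℤ) := by
      simp [hsw, Equiv.Perm.sign_swap hne]
    set g2 : Fin n → R := fun t => M (σ t) (c t) * u t with hg2
    set g4 : Fin n → R := fun t => M ((σ * sw) t) (c t) * u t with hg4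
    have tne : ∀ (t : Fin n), (t : ℕ) < i ∨ i + 2 ≤ (t : ℕ) → t ≠ i₀ ∧ t ≠ i₁ := by
      intro t ht
      constructor <;>
        · intro hh
          have : (t : ℕ) = i ∨ (t : ℕ) = i + 1 := by
            rw [hh]; simp [hi₀, hi₁]
          omega
    have agree : ∀ (t : Fin n), t ≠ i₀ → t ≠ i₁ → g4 t = g2 t := by
      intro t h1 h2
      simp only [hg2, hg4, Equiv.Perm.mul_apply, hsw, Equiv.swap_apply_of_ne_of_ne h1 h2]
    set P := ((List.ofFn g2).take i).prod with hP
    set Q := ((List.ofFn g2).drop (i + 2)).prod with hQ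
    have hswi₀ : sw i₀ = i₁ := Equiv.swap_apply_left _ _
    have hswi₁ : sw i₁ = i₀ := Equiv.swap_apply_right _ _
    set v := c i₀ with hv
    have e2 : (List.ofFn g2).prod = P * (M (σ i₀) v * (M (σ i₁) v * u i₁ * Q)) := by
      rw [prod_split h g2]
      simp only [hg2]
      rw [show (⟨i, by omega⟩ : Fin n) = i₀ from rfl, show (⟨i+1, h⟩ : Fin n) = i₁ from rfl,
        hui, mul_one, ← hc, ← hv]
    have e4 : (List.ofFn g4).prod = P * (M (σ i₁) v * (M (σ i₀) v * u i₁ * Q)) := by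
      rw [prod_split h g4]
      have t1 : ((List.ofFn g4).take i).prod = P := by
        rw [hP]; congr 1
        apply take_ofFn_congr
        intro t ht
        have := tne t (Or.inl ht)
        exact agree t this.1 this.2
      have t2 : ((List.ofFn g4).drop (i+2)).prod = Q := by
        rw [hQ]; congr 1
        apply drop_ofFn_congr
        intro t ht
        have := tne t (Or.inr ht)
        exact agree t this.1 this.2
      rw [t1, t2]
      simp only [hg4]
      rw [show (⟨i, by omega⟩ : Fin n) = i₀ from rfl, show (⟨i+1, h⟩ : Fin n) = i₁ from rfl,
        hui, mul_one, ← hc, ← hv]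
      simp only [Equiv.Perm.mul_apply, hswi₀, hswi₁]
    have hcomm : M (σ i₀) v * M (σ i₁) v = M (σ i₁) v * M (σ i₀) v := hM.1 _ _ _
    rw [hsign, e2, e4, neg_smul, ← smul_neg, ← smul_add]
    convert smul_zero _ using 2
    have hx : M (σ i₀) v * (M (σ i₁) v * u i₁ * Q) = M (σ i₁) v * (M (σ i₀) v * u i₁ * Q) := by
      rw [← mul_assoc, ← mul_assoc, ← mul_assoc, ← mul_assoc, hcomm]
    rw [hx]
    simp
  · intro σ _ hcon
    have : sw = 1 := mul_left_cancel (a := σ) (by rw [mul_one]; exact hcon)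
    have := congrArg (fun (e : Equiv.Perm (Fin n)) => e i₀) this
    simp [hsw, Equiv.swap_apply_left] at this
    exact hne this.symm
  · intro σ; exact Finset.mem_univ _
  · intro σ
    rw [mul_assoc, Equiv.swap_mul_self, mul_one]

/-- general transposition of columns for the all-ones decoration, by induction on distance -/
theorem msum_swap_one_aux {M : Matrix (Fin n) (Fin n) R} (hM : IsManin M) :
    ∀ (d : ℕ) (i j : Fin n), (j : ℕ) = (i : ℕ) + d + 1 → ∀ c : Fin n → Fin n,
      msum M (c ∘ Equiv.swap i j) (fun _ => 1) = - msum M c (fun _ => 1) := by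
  intro d
  induction d with
  | zero =>
    intro i j hj c
    have h : (i : ℕ) + 1 < n := by omega
    have hi : (⟨(i : ℕ), by omega⟩ : Fin n) = i := rfl
    have hjj : (⟨(i : ℕ) + 1, h⟩ : Fin n) = j := by
      apply Fin.ext; simp [hj]
    have := msum_swap_adjacent (c := c) (u := fun _ => (1:R)) hM h rfl rfl
    rwa [hi, hjj] at this
  | succ d ih =>
    intro i j hj c
    have hi1 : (i : ℕ) + 1 < n := by omega
    set i' : Fin n := ⟨(i : ℕ) + 1, hi1⟩ with hi'
    have hii' : i ≠ i' := by simp [Fin.ext_iff, hi']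
    have hi'j : (j : ℕ) = (i' : ℕ) + d + 1 := by simp [hi']; omega
    have hij : i ≠ j := by simp [Fin.ext_iff]; omega
    have hi'j' : i' ≠ j := by simp [Fin.ext_iff, hi']; omega
    -- swap i j = swap i i' ∘ swap i' j ∘ swap i i'  (as functions)
    have hfun : c ∘ Equiv.swap i j =
        (((c ∘ Equiv.swap i i') ∘ Equiv.swap i' j) ∘ Equiv.swap i i') := by
      funext t
      simp only [Function.comp_apply]
      by_cases h1 : t = i
      · subst h1
        rw [Equiv.swap_apply_left, Equiv.swap_apply_left, Equiv.swap_apply_left,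
          Equiv.swap_apply_of_ne_of_ne (Ne.symm hij) (Ne.symm hi'j')]
      by_cases h2 : t = i'
      · subst h2
        rw [Equiv.swap_apply_of_ne_of_ne (Ne.symm hii') hi'j', Equiv.swap_apply_right,
          Equiv.swap_apply_of_ne_of_ne hii' hij, Equiv.swap_apply_left]
      by_cases h3 : t = j
      · subst h3
        rw [Equiv.swap_apply_right, Equiv.swap_apply_of_ne_of_ne (Ne.symm hij) (Ne.symm hi'j'),
          Equiv.swap_apply_right, Equiv.swap_apply_right]
      · rw [Equiv.swap_apply_of_ne_of_ne h1 h3, Equiv.swap_apply_of_ne_of_ne h1 h2,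
          Equiv.swap_apply_of_ne_of_ne h2 h3, Equiv.swap_apply_of_ne_of_ne h1 h2]
    have adj : ∀ c' : Fin n → Fin n,
        msum M (c' ∘ Equiv.swap i i') (fun _ => 1) = - msum M c' (fun _ => 1) := by
      intro c'
      have := msum_swap_adjacent (c := c') (u := fun _ => (1:R)) hM hi1 rfl rfl
      rwa [show (⟨(i : ℕ), by omega⟩ : Fin n) = i from rfl] at this
    rw [hfun, adj (((c ∘ Equiv.swap i i') ∘ Equiv.swap i' j)), ih i' j hi'j (c ∘ Equiv.swap i i'),
      adj c]
    simp

theorem msum_swap_one {M : Matrix (Fin n) (Fin n) R} (hM : IsManin M)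
    (c : Fin n → Fin n) {i j : Fin n} (hij : i ≠ j) :
    msum M (c ∘ Equiv.swap i j) (fun _ => 1) = - msum M c (fun _ => 1) := by
  rcases lt_or_gt_of_ne hij with hlt | hlt
  · exact msum_swap_one_aux hM ((j : ℕ) - (i : ℕ) - 1) i j (by omega) c
  · rw [Equiv.swap_comm]
    exact msum_swap_one_aux hM ((i : ℕ) - (j : ℕ) - 1) j i (by omega) c

theorem msum_perm {M : Matrix (Fin n) (Fin n) R} (hM : IsManin M)
    (τ : Equiv.Perm (Fin n)) :
    ∀ c : Fin n → Fin n,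
      msum M (c ∘ τ) (fun _ => 1) = (Equiv.Perm.sign τ : ℤ) • msum M c (fun _ => 1) := by
  refine Equiv.Perm.swap_induction_on τ (by intro c; simp) ?_
  · intro g x y hxy ih c
    have hcomp : c ∘ ⇑(Equiv.swap x y * g) = (c ∘ Equiv.swap x y) ∘ g := by
      funext t; simp [Equiv.Perm.mul_apply]
    rw [hcomp, ih (c ∘ Equiv.swap x y), msum_swap_one hM c hxy]
    rw [Equiv.Perm.sign_mul, Equiv.Perm.sign_swap hxy]
    push_cast
    simp

theorem cdet_col_perm {M : Matrix (Fin n) (Fin n) R} (hM : IsManin M)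
    (τ : Equiv.Perm (Fin n)) :
    cdet (M.submatrix id τ) = (Equiv.Perm.sign τ : ℤ) • cdet M := by
  rw [cdet_eq_msum, cdet_eq_msum]
  have h1 : msum (M.submatrix id τ) id (fun _ => 1) = msum M (id ∘ τ) (fun _ => 1) := rfl
  rw [h1, msum_perm hM τ id]

theorem cdet_row_perm (M : Matrix (Fin n) (Fin n) R) (τ : Equiv.Perm (Fin n)) :
    cdet (M.submatrix τ id) = (Equiv.Perm.sign τ : ℤ) • cdet M := by
  unfold cdet
  rw [Finset.smul_sum]
  rw [← Equiv.sum_comp (Equiv.mulLeft τ⁻¹) (fun σ =>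
    ((Equiv.Perm.sign σ : ℤ) • (List.ofFn fun t => M.submatrix τ id (σ t) t).prod))]
  apply Finset.sum_congr rfl
  intro σ _
  have hrow : ∀ t : Fin n, M.submatrix (⇑τ) id ((Equiv.mulLeft τ⁻¹ σ) t) t = M (σ t) t := by
    intro t
    simp [Matrix.submatrix_apply, Equiv.Perm.mul_apply]
  have hsig : ((Equiv.Perm.sign (Equiv.mulLeft τ⁻¹ σ) : ℤ)) =
      (Equiv.Perm.sign τ : ℤ) * (Equiv.Perm.sign σ : ℤ) := by
    simp only [Equiv.coe_mulLeft, Equiv.Perm.sign_mul, Equiv.Perm.sign_inv]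
    push_cast
    ring
  simp only [hrow, hsig, smul_smul]

theorem sign_sq_smul (τ : Equiv.Perm (Fin n)) (x : R) :
    (Equiv.Perm.sign τ : ℤ) • ((Equiv.Perm.sign τ : ℤ) • x) = x := by
  rw [smul_smul, ← Units.val_mul, Int.units_mul_self, Units.val_one, one_smul]

theorem cdet_submatrix_equiv {m : ℕ} {M : Matrix (Fin n) (Fin n) R} (hM : IsManin M)
    (e : Fin m ≃ Fin n) : cdet (M.submatrix e e) = cdet M := by
  have h : m = n := by simpa using Fintype.card_congr e
  subst h
  have h2 : M.submatrix ⇑e ⇑e = (M.submatrix ⇑e id).submatrix id ⇑e := by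
    rw [Matrix.submatrix_submatrix]
    rfl
  rw [h2, cdet_col_perm (isManin_submatrix hM _ _) e, cdet_row_perm M e, sign_sq_smul]

/-- a duplicated column (with clean decorations in between) kills the decorated sum -/
theorem msum_dup_aux {M : Matrix (Fin n) (Fin n) R} (hM : IsManin M) :
    ∀ (d : ℕ) (c : Fin n → Fin n) (u : Fin n → R) (v j : Fin n),
      (j : ℕ) = (v : ℕ) + d + 1 → c v = c j →
      (∀ t : Fin n, v ≤ t → t < j → u t = 1) → msum M c u = 0 := by
  intro d
  induction d with
  | zero =>
    intro c u v j hj hc hu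
    have h : (v : ℕ) + 1 < n := by omega
    have hjj : (⟨(v : ℕ) + 1, h⟩ : Fin n) = j := by apply Fin.ext; simp [hj]
    exact msum_adjacent_dup hM h (by rw [hjj]; exact hc)
      (hu v le_rfl (by rw [Fin.lt_iff_val_lt_val]; omega))
  | succ d ih =>
    intro c u v j hj hc hu
    have hv1 : (v : ℕ) + 1 < n := by omega
    set v' : Fin n := ⟨(v : ℕ) + 1, hv1⟩ with hv'
    have hvv' : v ≠ v' := by simp [Fin.ext_iff, hv']
    have hswv : Equiv.swap v v' v = v' := Equiv.swap_apply_left _ _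
    have hswv' : Equiv.swap v v' v' = v := Equiv.swap_apply_right _ _
    have hswj : Equiv.swap v v' j = j := by
      apply Equiv.swap_apply_of_ne_of_ne
      · intro hh; have := congrArg Fin.val hh; omega
      · intro hh; have := congrArg Fin.val hh; simp only [hv'] at this; omega
    set c₁ := c ∘ Equiv.swap v v' with hc₁
    -- u is invariant at the swapped positions (both are 1)
    have huv : u v = 1 := hu v le_rfl (by rw [Fin.lt_iff_val_lt_val]; omega)
    have huv' : u v' = 1 := hu v' (by rw [Fin.le_iff_val_le_val]; simp only [hv']; omega)
      (by rw [Fin.lt_iff_val_lt_val]; simp only [hv']; omega)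
    have step : msum M c u = - msum M c₁ u := by
      have hcc : c = c₁ ∘ Equiv.swap v v' := by
        funext t
        simp only [hc₁, Function.comp_apply, Equiv.swap_apply_self]
      rw [hcc]
      have := msum_swap_adjacent (c := c₁) (u := u) hM hv1
        (by rw [show (⟨(v:ℕ), by omega⟩ : Fin n) = v from rfl]; exact huv) (by rw [show (⟨(v:ℕ)+1, hv1⟩ : Fin n) = v' from rfl]; exact huv')
      rwa [show (⟨(v:ℕ), by omega⟩ : Fin n) = v from rfl, show (⟨(v:ℕ)+1, hv1⟩ : Fin n) = v' from rfl] at this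
    rw [step]
    have : msum M c₁ u = 0 := by
      apply ih c₁ u v' j
      · simp [hv']; omega
      · simp only [hc₁, Function.comp_apply, hswv', hswj]
        exact hc
      · intro t h1 h2
        apply hu t _ h2
        rw [Fin.le_iff_val_le_val] at h1 ⊢
        simp [hv'] at h1
        omega
    rw [this, neg_zero]

/-- the main kill lemma: under a non-identity "lower" column choice, the decorated sum vanishes -/
theorem msum_kill {M : Matrix (Fin n) (Fin n) R} (hM : IsManin M)
    {c : Fin n → Fin n} {u : Fin n → R} (hle : ∀ t, c t ≤ t) (hne : c ≠ id)
    (hu : ∀ t, c t = t → u t = 1) : msum M c u = 0 := by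
  have hex : ∃ m : ℕ, ∃ h : m < n, c ⟨m, h⟩ ≠ ⟨m, h⟩ := by
    rcases Function.ne_iff.mp hne with ⟨t, ht⟩
    exact ⟨(t : ℕ), t.isLt, by simpa using ht⟩
  classical
  let j₀n := Nat.find hex
  obtain ⟨hj₀lt, hj₀⟩ := Nat.find_spec hex
  set j₀ : Fin n := ⟨j₀n, hj₀lt⟩ with hj₀def
  have hmin : ∀ t : Fin n, (t : ℕ) < j₀n → c t = t := by
    intro t ht
    by_contra hcon
    exact absurd (Nat.find_min hex (m := (t : ℕ)) ht) (by push_neg; exact ⟨t.isLt, by simpa using hcon⟩)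
  set v := c j₀ with hv
  have hvlt : (v : ℕ) < j₀n := by
    have h1 : (v : ℕ) ≤ j₀n := by
      have hle' := hle j₀
      rw [Fin.le_iff_val_le_val] at hle'
      simpa [hj₀def] using hle'
    rcases Nat.lt_or_ge (v : ℕ) j₀n with h | h
    · exact h
    · exfalso; apply hj₀; apply Fin.ext
      simp only [hj₀def]
      omega
  have hcv : c v = v := hmin v hvlt
  apply msum_dup_aux hM (j₀n - (v : ℕ) - 1) c u v j₀
  · simp [hj₀def]; omega
  · rw [hcv, hv]
  · intro t h1 h2
    apply hu
    apply hmin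
    rw [Fin.lt_iff_val_lt_val] at h2
    simpa [hj₀def] using h2

theorem ofFn_prod_sum {α : Type*} [Fintype α] :
    ∀ {m : ℕ} (f : Fin m → α → R),
      (List.ofFn fun t => ∑ c : α, f t c).prod =
        ∑ g : Fin m → α, (List.ofFn fun t => f t (g t)).prod := by
  intro m
  induction m with
  | zero =>
    intro f
    simp
  | succ m ih =>
    intro f
    rw [List.ofFn_succ, List.prod_cons, ih (fun t c => f t.succ c)]
    rw [Finset.sum_mul_sum]
    rw [← (Fin.consEquiv (fun _ : Fin (m+1) => α)).sum_comp
      (fun g : Fin (m+1) → α => (List.ofFn fun t => f t (g t)).prod)]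
    rw [Fintype.sum_prod_type]
    apply Finset.sum_congr rfl
    intro x _
    apply Finset.sum_congr rfl
    intro g _
    rw [List.ofFn_succ, List.prod_cons]
    congr 1 <;> simp [Fin.consEquiv]

theorem msum_of_u_zero {M : Matrix (Fin n) (Fin n) R} {c : Fin n → Fin n} {u : Fin n → R}
    (t₀ : Fin n) (h : u t₀ = 0) : msum M c u = 0 := by
  unfold msum
  apply Finset.sum_eq_zero
  intro σ _
  have : (List.ofFn fun t => M (σ t) (c t) * u t).prod = 0 := by
    apply List.prod_eq_zero
    have : M (σ t₀) (c t₀) * u t₀ = 0 := by rw [h, mul_zero]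
    rw [← this]
    exact List.mem_ofFn.mpr ⟨t₀, rfl⟩
  rw [this, smul_zero]

/-- right multiplication by an upper unitriangular matrix preserves `cdet` of a Manin matrix -/
theorem cdet_mul_unitriangular {M U : Matrix (Fin n) (Fin n) R} (hM : IsManin M)
    (hU1 : ∀ i, U i i = 1) (hU0 : ∀ i j : Fin n, j < i → U i j = 0) :
    cdet (M * U) = cdet M := by
  unfold cdet
  have expand : ∀ σ : Equiv.Perm (Fin n),
      (List.ofFn fun t => (M * U) (σ t) t).prod =
        ∑ g : Fin n → Fin n, (List.ofFn fun t => M (σ t) (g t) * U (g t) t).prod := by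
    intro σ
    have h1 : (fun t => (M * U) (σ t) t) = fun t => ∑ c : Fin n, M (σ t) c * U c t := by
      funext t; rw [Matrix.mul_apply]
    rw [h1, ofFn_prod_sum (fun t c => M (σ t) c * U c t)]
  simp_rw [expand, Finset.smul_sum]
  rw [Finset.sum_comm]
  have hmain : ∀ g : Fin n → Fin n,
      (∑ σ : Equiv.Perm (Fin n), (Equiv.Perm.sign σ : ℤ) •
        (List.ofFn fun t => M (σ t) (g t) * U (g t) t).prod) = msum M g (fun t => U (g t) t) := by
    intro g; rfl
  calc (∑ g : Fin n → Fin n, ∑ σ : Equiv.Perm (Fin n), (Equiv.Perm.sign σ : ℤ) •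
        (List.ofFn fun t => M (σ t) (g t) * U (g t) t).prod)
      = ∑ g : Fin n → Fin n, msum M g (fun t => U (g t) t) := by
        apply Finset.sum_congr rfl; intro g _; exact hmain g
    _ = msum M id (fun t => U (id t) t) := by
        apply Finset.sum_eq_single
        · intro g _ hg
          by_cases hle : ∀ t, g t ≤ t
          · exact msum_kill hM hle hg (fun t ht => by rw [ht]; exact hU1 t)
          · push_neg at hle
            obtain ⟨t₀, ht₀⟩ := hle
            exact msum_of_u_zero t₀ (hU0 _ _ ht₀)
        · intro h; exact absurd (Finset.mem_univ _) h
    _ = cdet M := by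
        rw [cdet_eq_msum]
        unfold msum
        apply Finset.sum_congr rfl
        intro σ _
        congr 1
        apply congrArg
        apply congrArg
        funext t
        simp [hU1 t]

theorem sumCongr_swap_conj {α β : Type*} (a : Equiv.Perm α) (b : Equiv.Perm β) :
    (Equiv.sumComm α β).permCongr (Equiv.sumCongr a b) = Equiv.sumCongr b a := by
  ext x
  cases x <;> simp [Equiv.permCongr_apply]

/-- cdet of a block lower-triangular matrix splits as product (in the fixed order). -/
theorem cdet_block_lower {l k : ℕ} (P : Matrix (Fin l) (Fin l) R) (B' : Matrix (Fin k) (Fin l) R)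
    (S' : Matrix (Fin k) (Fin k) R) :
    cdet ((Matrix.fromBlocks P 0 B' S').submatrix finSumFinEquiv.symm finSumFinEquiv.symm)
      = cdet P * cdet S' := by
  classical
  set e : Fin l ⊕ Fin k ≃ Fin (l + k) := finSumFinEquiv with he
  set W := (Matrix.fromBlocks P 0 B' S').submatrix ⇑e.symm ⇑e.symm with hW
  set Φ : Equiv.Perm (Fin l) × Equiv.Perm (Fin k) → Equiv.Perm (Fin (l + k)) :=
    fun p => (e.permCongr) (Equiv.sumCongr p.1 p.2) with hΦ
  have hΦ_inj : Function.Injective Φ := by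
    intro p q hpq
    simp only [hΦ] at hpq
    have h2 := e.permCongr.injective hpq
    have hL : ∀ x : Fin l, (Sum.inl (p.1 x) : Fin l ⊕ Fin k) = Sum.inl (q.1 x) := by
      intro x
      have := congrArg (fun s : Equiv.Perm (Fin l ⊕ Fin k) => s (Sum.inl x)) h2
      simpa using this
    have hR : ∀ x : Fin k, (Sum.inr (p.2 x) : Fin l ⊕ Fin k) = Sum.inr (q.2 x) := by
      intro x
      have := congrArg (fun s : Equiv.Perm (Fin l ⊕ Fin k) => s (Sum.inr x)) h2
      simpa using this
    have h3 : p.1 = q.1 := by ext x; exact congrArg Fin.val (by simpa using hL x)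
    have h4 : p.2 = q.2 := by ext x; exact congrArg Fin.val (by simpa using hR x)
    exact Prod.ext h3 h4
  unfold cdet
  rw [show (∑ σ : Equiv.Perm (Fin (l + k)), (Equiv.Perm.sign σ : ℤ) •
      (List.ofFn fun t => W (σ t) t).prod) =
      ∑ σ ∈ Finset.univ.image Φ, (Equiv.Perm.sign σ : ℤ) •
      (List.ofFn fun t => W (σ t) t).prod from ?_, Finset.sum_image (fun a _ b _ h => hΦ_inj h)]
  · -- main computation over pairs of permutations
    rw [Fintype.sum_prod_type]
    rw [Finset.sum_mul_sum]
    apply Finset.sum_congr rfl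
    intro σ₁ _
    apply Finset.sum_congr rfl
    intro σ₂ _
    have hsign : (Equiv.Perm.sign (Φ (σ₁, σ₂)) : ℤ) =
        (Equiv.Perm.sign σ₁ : ℤ) * (Equiv.Perm.sign σ₂ : ℤ) := by
      simp only [hΦ, Equiv.Perm.sign_permCongr, Equiv.Perm.sign_sumCongr]
      push_cast
      ring
    have happ_l : ∀ a : Fin l, Φ (σ₁, σ₂) (e (Sum.inl a)) = e (Sum.inl (σ₁ a)) := by
      intro a
      simp [hΦ, Equiv.permCongr_apply]
    have happ_r : ∀ b : Fin k, Φ (σ₁, σ₂) (e (Sum.inr b)) = e (Sum.inr (σ₂ b)) := by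
      intro b
      simp [hΦ, Equiv.permCongr_apply]
    have hprod : (List.ofFn fun t => W (Φ (σ₁, σ₂) t) t).prod =
        (List.ofFn fun a => P (σ₁ a) a).prod * (List.ofFn fun b => S' (σ₂ b) b).prod := by
      rw [List.ofFn_add (f := fun t : Fin (l + k) => W (Φ (σ₁, σ₂) t) t), List.prod_append]
      congr 1
      · apply congrArg; apply congrArg; funext a
        have h1 : Fin.castLE (Nat.le_add_right l k) a = e (Sum.inl a) := (finSumFinEquiv_apply_left a).symm
        rw [h1, happ_l a, hW]
        simp [Matrix.submatrix_apply]
      · apply congrArg; apply congrArg; funext b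
        have h1 : Fin.natAdd l b = e (Sum.inr b) := (finSumFinEquiv_apply_right b).symm
        rw [h1, happ_r b, hW]
        simp [Matrix.submatrix_apply]
    rw [hsign, hprod, smul_mul_assoc, mul_smul_comm, smul_smul]
  · -- terms outside the image vanish
    symm
    apply Finset.sum_subset (Finset.subset_univ _)
    intro σ _ hσ
    -- σ is not block-preserving: some inr column is sent to an inl row
    by_cases hmaps : ∀ b : Fin k, ∃ b' : Fin k, σ (e (Sum.inr b)) = e (Sum.inr b')
    · exfalso
      apply hσ
      -- build the pair
      set s : Equiv.Perm (Fin l ⊕ Fin k) := e.symm.permCongr σ with hs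
      have hmapsTo : ∀ b : Fin k, ∃ b', s (Sum.inr b) = Sum.inr b' := by
        intro b
        obtain ⟨b', hb'⟩ := hmaps b
        exact ⟨b', by simp [hs, Equiv.permCongr_apply, hb']⟩
      set s' : Equiv.Perm (Fin k ⊕ Fin l) := (Equiv.sumComm (Fin l) (Fin k)).permCongr s with hs'
      have hmapsTo' : Set.MapsTo s' (Set.range Sum.inl) (Set.range Sum.inl) := by
        rintro x ⟨b, rfl⟩
        obtain ⟨b', hb'⟩ := hmapsTo b
        exact ⟨b', by simp [hs', Equiv.permCongr_apply, hb']⟩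
      obtain ⟨p, hp⟩ := Equiv.Perm.mem_sumCongrHom_range_of_perm_mapsTo_inl hmapsTo'
      -- p : Perm (Fin k) × Perm (Fin l), s' = sumCongr p.1 p.2
      apply Finset.mem_image.mpr
      refine ⟨(p.2, p.1), Finset.mem_univ _, ?_⟩
      have hss' : s = (Equiv.sumComm (Fin k) (Fin l)).permCongr s' := by
        ext x
        simp [hs', Equiv.permCongr_apply]
      have hs2 : s = Equiv.sumCongr p.2 p.1 := by
        rw [hss', ← hp,
          show (Equiv.Perm.sumCongrHom (Fin k) (Fin l)) p = Equiv.sumCongr p.1 p.2 from rfl]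
        exact sumCongr_swap_conj p.1 p.2
      simp only [hΦ]
      rw [← hs2]
      ext x
      simp [hs, Equiv.permCongr_apply]
    · push_neg at hmaps
      obtain ⟨b, hb⟩ := hmaps
      -- the entry in column e (inr b) is zero
      have hzero : W (σ (e (Sum.inr b))) (e (Sum.inr b)) = 0 := by
        rcases hsum : e.symm (σ (e (Sum.inr b))) with a' | b'
        · rw [hW]
          simp only [Matrix.submatrix_apply, Equiv.symm_apply_apply, hsum,
            Matrix.fromBlocks_apply₁₂]
          rfl
        · exfalso
          exact hb b' (by rw [← hsum]; simp)
      apply smul_eq_zero_of_right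
      apply List.prod_eq_zero
      rw [← hzero]
      exact List.mem_ofFn.mpr ⟨e (Sum.inr b), rfl⟩

theorem cdet_map {A A' : Type*} [Ring A] [Ring A'] (f : A →+* A') {m : ℕ}
    (M : Matrix (Fin m) (Fin m) A) : cdet (M.map f) = f (cdet M) := by
  unfold cdet
  rw [map_sum]
  apply Finset.sum_congr rfl
  intro σ _
  rw [map_zsmul]
  congr 1
  rw [map_list_prod f, List.map_ofFn]
  rfl

end ManinAux

open ManinAux

/-- Schur complement formula for the column-ordered determinant of a Manin matrix,
when the bottom-right block has a right inverse in an overalgebra `A''` into which the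
base algebra embeds. -/
theorem stmt7 {A A' : Type*} [Ring A] [Ring A'] (f : A →+* A')
    (hf : Function.Injective f) (k l : ℕ)
    (Ablk : Matrix (Fin k) (Fin k) A) (B : Matrix (Fin k) (Fin l) A)
    (C : Matrix (Fin l) (Fin k) A) (D : Matrix (Fin l) (Fin l) A)
    (hM : IsManin ((Matrix.fromBlocks Ablk B C D).submatrix
      finSumFinEquiv.symm finSumFinEquiv.symm))
    (Dinv : Matrix (Fin l) (Fin l) A') (hDinv : D.map f * Dinv = 1) :
    f (cdet ((Matrix.fromBlocks Ablk B C D).submatrix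
        finSumFinEquiv.symm finSumFinEquiv.symm)) =
      cdet (D.map f) * cdet (Ablk.map f - B.map f * Dinv * C.map f) := by
  classical
  set e₁ : Fin k ⊕ Fin l ≃ Fin (k + l) := finSumFinEquiv with he₁
  set e₂ : Fin l ⊕ Fin k ≃ Fin (l + k) := finSumFinEquiv with he₂
  set Am := Ablk.map f with hAm
  set Bm := B.map f with hBm
  set Cm := C.map f with hCm
  set Dm := D.map f with hDm
  set N : Matrix (Fin (k + l)) (Fin (k + l)) A :=
    (Matrix.fromBlocks Ablk B C D).submatrix ⇑e₁.symm ⇑e₁.symm with hN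
  have hNm : IsManin (N.map f) := isManin_map hM f
  have hNmap : N.map f = (Matrix.fromBlocks Am Bm Cm Dm).submatrix ⇑e₁.symm ⇑e₁.symm := by
    rw [hN, ← Matrix.submatrix_map, Matrix.fromBlocks_map]
  set g : Fin (l + k) ≃ Fin (k + l) :=
    e₂.symm.trans ((Equiv.sumComm (Fin l) (Fin k)).trans e₁) with hg
  set Q : Matrix (Fin (l + k)) (Fin (l + k)) A' :=
    (Matrix.fromBlocks Dm Cm Bm Am).submatrix ⇑e₂.symm ⇑e₂.symm with hQdef
  have hQ : Q = (N.map f).submatrix ⇑g ⇑g := by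
    rw [hNmap, Matrix.submatrix_submatrix]
    ext i j
    simp only [hQdef, Matrix.submatrix_apply, Function.comp_apply, hg, Equiv.trans_apply,
      Equiv.symm_apply_apply]
    rcases hx : e₂.symm i with a | a <;> rcases hy : e₂.symm j with b | b <;>
      simp [Equiv.sumComm_apply]
  have hQManin : IsManin Q := by
    rw [hQ]; exact isManin_submatrix hNm _ _
  have hcdetQ : cdet Q = cdet (N.map f) := by
    rw [hQ]; exact cdet_submatrix_equiv hNm g
  set X : Matrix (Fin l) (Fin k) A' := -(Dinv * Cm) with hX
  set U : Matrix (Fin (l + k)) (Fin (l + k)) A' :=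
    (Matrix.fromBlocks 1 X 0 1).submatrix ⇑e₂.symm ⇑e₂.symm with hU
  have hU1 : ∀ i, U i i = 1 := by
    intro i
    rcases hx : e₂.symm i with a | a <;> simp [hU, Matrix.submatrix_apply, hx]
  have hU0 : ∀ i j : Fin (l + k), j < i → U i j = 0 := by
    intro i j hij
    have hne : i ≠ j := (ne_of_lt hij).symm
    rcases hx : e₂.symm i with a | a <;> rcases hy : e₂.symm j with b | b
    · have hab : a ≠ b := by
        intro hh
        apply hne
        have : e₂.symm i = e₂.symm j := by rw [hx, hy, hh]
        exact e₂.symm.injective this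
      simp [hU, Matrix.submatrix_apply, hx, hy, Matrix.one_apply_ne hab]
    · -- i in first block, j in second: j < i impossible
      exfalso
      have hi : i = e₂ (Sum.inl a) := by rw [← hx]; simp
      have hj : j = e₂ (Sum.inr b) := by rw [← hy]; simp
      have hiv : (i : ℕ) = (a : ℕ) := by rw [hi, he₂]; simp
      have hjv : (j : ℕ) = l + (b : ℕ) := by rw [hj, he₂]; simp
      rw [Fin.lt_iff_val_lt_val] at hij
      omega
    · simp [hU, Matrix.submatrix_apply, hx, hy]
    · have hab : a ≠ b := by
        intro hh
        apply hne
        have : e₂.symm i = e₂.symm j := by rw [hx, hy, hh]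
        exact e₂.symm.injective this
      simp [hU, Matrix.submatrix_apply, hx, hy, Matrix.one_apply_ne hab]
  have hQU : Q * U = (Matrix.fromBlocks Dm 0 Bm (Am - Bm * Dinv * Cm)).submatrix
      ⇑e₂.symm ⇑e₂.symm := by
    rw [hQdef, hU, Matrix.submatrix_mul_equiv _ _ _ e₂.symm _, Matrix.fromBlocks_multiply]
    have b11 : Dm * (1 : Matrix (Fin l) (Fin l) A') + Cm * (0 : Matrix (Fin k) (Fin l) A') = Dm := by
      rw [Matrix.mul_one, Matrix.mul_zero, add_zero]
    have b12 : Dm * X + Cm * (1 : Matrix (Fin k) (Fin k) A') = (0 : Matrix (Fin l) (Fin k) A') := by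
      rw [Matrix.mul_one, hX, Matrix.mul_neg, ← Matrix.mul_assoc, hDinv, Matrix.one_mul,
        neg_add_cancel]
    have b21 : Bm * (1 : Matrix (Fin l) (Fin l) A') + Am * (0 : Matrix (Fin k) (Fin l) A') = Bm := by
      rw [Matrix.mul_one, Matrix.mul_zero, add_zero]
    have b22 : Bm * X + Am * (1 : Matrix (Fin k) (Fin k) A') = Am - Bm * Dinv * Cm := by
      rw [Matrix.mul_one, hX, Matrix.mul_neg, ← Matrix.mul_assoc]
      abel
    rw [b11, b12, b21, b22]
  have step1 : cdet (Q * U) = cdet Q := cdet_mul_unitriangular hQManin hU1 hU0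
  have step2 : cdet (Q * U) = cdet Dm * cdet (Am - Bm * Dinv * Cm) := by
    rw [hQU]
    exact cdet_block_lower Dm Bm (Am - Bm * Dinv * Cm)
  calc f (cdet N) = cdet (N.map f) := (cdet_map f N).symm
    _ = cdet Q := hcdetQ.symm
    _ = cdet (Q * U) := step1.symm
    _ = cdet Dm * cdet (Am - Bm * Dinv * Cm) := step2
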